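/- Let τ be a density matrix indexed by triples (a,b,d) ∈ Fin d_A × Fin d_B × Fin d_D, let σ be a density matrix of size d_C × d_C, and let σ̂ = σ ⊗ τ be their Kronecker product, regarded as a state on the four subsystems A, B, C, D. Then for every real q ≠ 1, q > 0, the conditional quantum Tsallis mutual information satisfies the identity I_q(A:B|CD)_{σ̂} = (∑_{i with μ_i>0} μ_i^q) · I_q(A:B|D)_τ, where μ_i are the eigenvalues of σ; consequently, for q > 1, if I_q(A:B|D)_τ ≤ f(q,d_A,d_B) then also I_q(A:B|CD)_{σ̂} ≤ f(q,d_A,d_B). -/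

import Mathlib

open Finset Matrix Kronecker ComplexOrder

/-- Quantum Tsallis entropy of order `q` of a matrix `ρ` (intended: a density
matrix), defined via the eigenvalues of `ρ` when `ρ` is Hermitian, with the sum
restricted to the strictly positive eigenvalues. -/
noncomputable def qTsallis {n : Type*} [Fintype n] [DecidableEq n]
    (q : ℝ) (ρ : Matrix n n ℂ) : ℝ :=
  if h : ρ.IsHermitian then
    (1 / (1 - q)) * ((∑ i ∈ univ.filter (fun i => 0 < h.eigenvalues i),
      h.eigenvalues i ^ q) - 1)
  else 0

/-- The bound `f(q,a,b) = (1/(q−1))·(1−a^{1−q})·(1−b^{1−q})`. -/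
noncomputable def fBound (q : ℝ) (a b : ℕ) : ℝ :=
  (1 / (q - 1)) * (1 - (a : ℝ) ^ (1 - q)) * (1 - (b : ℝ) ^ (1 - q))

/-- Partial trace over the second factor of a tripartite matrix. -/
noncomputable def ptraceB {α β δ : Type*} [Fintype β]
    (ρ : Matrix (α × β × δ) (α × β × δ) ℂ) : Matrix (α × δ) (α × δ) ℂ :=
  Matrix.of fun w w' => ∑ b, ρ (w.1, b, w.2) (w'.1, b, w'.2)

/-- Partial trace over the first factor of a tripartite matrix. -/
noncomputable def ptraceA {α β δ : Type*} [Fintype α]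
    (ρ : Matrix (α × β × δ) (α × β × δ) ℂ) : Matrix (β × δ) (β × δ) ℂ :=
  Matrix.of fun w w' => ∑ a, ρ (a, w.1, w.2) (a, w'.1, w'.2)

/-- Partial trace over the first two factors of a tripartite matrix. -/
noncomputable def ptraceAB {α β δ : Type*} [Fintype α] [Fintype β]
    (ρ : Matrix (α × β × δ) (α × β × δ) ℂ) : Matrix δ δ ℂ :=
  Matrix.of fun d d' => ∑ a, ∑ b, ρ (a, b, d) (a, b, d')

/-- Partial trace over the third factor (`B`) of a four-partite matrix indexed as
`C × A × B × D`. -/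
noncomputable def ptraceB4 {γ α β δ : Type*} [Fintype β]
    (ρ : Matrix (γ × α × β × δ) (γ × α × β × δ) ℂ) :
    Matrix (γ × α × δ) (γ × α × δ) ℂ :=
  Matrix.of fun w w' => ∑ b, ρ (w.1, w.2.1, b, w.2.2) (w'.1, w'.2.1, b, w'.2.2)

/-- Partial trace over the second factor (`A`) of a four-partite matrix indexed as
`C × A × B × D`. -/
noncomputable def ptraceA4 {γ α β δ : Type*} [Fintype α]
    (ρ : Matrix (γ × α × β × δ) (γ × α × β × δ) ℂ) :
    Matrix (γ × β × δ) (γ × β × δ) ℂ :=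
  Matrix.of fun w w' => ∑ a, ρ (w.1, a, w.2.1, w.2.2) (w'.1, a, w'.2.1, w'.2.2)

/-- Partial trace over the factors `A` and `B` of a four-partite matrix indexed as
`C × A × B × D`. -/
noncomputable def ptraceAB4 {γ α β δ : Type*} [Fintype α] [Fintype β]
    (ρ : Matrix (γ × α × β × δ) (γ × α × β × δ) ℂ) :
    Matrix (γ × δ) (γ × δ) ℂ :=
  Matrix.of fun w w' => ∑ a, ∑ b, ρ (w.1, a, b, w.2) (w'.1, a, b, w'.2)

set_option linter.unusedSectionVars false

section AuxProofs
open Polynomial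

variable {n m : Type*} [Fintype n] [DecidableEq n] [Fintype m] [DecidableEq m]

lemma aux_charpoly_conj (U A V : Matrix n n ℂ) (hUV : U * V = 1) :
    (U * A * V).charpoly = A.charpoly := by
  have hm : ∀ (M N : Matrix n n ℂ), (M * N).map (C : ℂ →+* ℂ[X]) = M.map C * N.map C := by
    intro M N; ext i j; simp [Matrix.map_apply, Matrix.mul_apply, map_sum]
  have hmap : U.map (C : ℂ →+* ℂ[X]) * V.map C = 1 := by
    rw [← hm, hUV, Matrix.map_one _ (map_zero C) (map_one C)]
  have hcm : charmatrix (U * A * V) = U.map C * charmatrix A * V.map C := by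
    rw [charmatrix, charmatrix]
    have hsc : U.map (C : ℂ →+* ℂ[X]) * Matrix.scalar n (X : ℂ[X]) * V.map C
        = Matrix.scalar n (X : ℂ[X]) := by
      rw [(Matrix.scalar_commute (X : ℂ[X]) (fun r => Commute.all _ _) (U.map C)).symm.eq]
      rw [mul_assoc, hmap, mul_one]
    rw [mul_sub, sub_mul, hsc]
    congr 1
    simp only [RingHom.mapMatrix_apply]
    rw [hm, hm]
  unfold Matrix.charpoly
  rw [hcm, det_mul, det_mul]
  have : (U.map (C : ℂ →+* ℂ[X])).det * (V.map C).det = 1 := by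
    rw [← det_mul, hmap, det_one]
  calc (U.map (C : ℂ →+* ℂ[X])).det * (charmatrix A).det * (V.map C).det
      = (U.map (C : ℂ →+* ℂ[X])).det * (V.map C).det * (charmatrix A).det := by ring
    _ = (charmatrix A).det := by rw [this, one_mul]

lemma aux_charpoly_diagonal (d : n → ℂ) :
    (Matrix.diagonal d).charpoly = ∏ i, (X - C (d i)) := by
  unfold Matrix.charpoly
  have : charmatrix (Matrix.diagonal d) = Matrix.diagonal (fun i => X - C (d i)) := by
    ext i j
    by_cases h : i = j
    · subst h; simp [charmatrix_apply, Matrix.diagonal_apply_eq]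
    · simp [charmatrix_apply_ne _ _ _ h, Matrix.diagonal_apply_ne _ h]
  rw [this, det_diagonal]

lemma aux_charpoly_spectral {A : Matrix n n ℂ} (hA : A.IsHermitian) :
    A.charpoly = ∏ i, (X - C ((hA.eigenvalues i : ℝ) : ℂ)) := by
  conv_lhs => rw [hA.spectral_theorem, Unitary.conjStarAlgAut_apply]
  rw [aux_charpoly_conj _ _ _ ((Matrix.mem_unitaryGroup_iff).mp (hA.eigenvectorUnitary).2),
    aux_charpoly_diagonal]
  rfl

lemma aux_eig_multiset {A : Matrix n n ℂ} (hA : A.IsHermitian) {U : Matrix n n ℂ}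
    (hU : U * star U = 1) (d : n → ℝ)
    (hAd : A = U * Matrix.diagonal (fun i => ((d i : ℝ) : ℂ)) * star U) :
    Multiset.map hA.eigenvalues Finset.univ.val = Multiset.map d Finset.univ.val := by
  have h1 : A.charpoly = ∏ i, (X - C ((d i : ℝ) : ℂ)) := by
    rw [hAd, aux_charpoly_conj _ _ _ hU, aux_charpoly_diagonal]
  have h2 := (aux_charpoly_spectral hA).symm.trans h1
  have key : ∀ f : n → ℝ, (∏ i, (X - C ((f i : ℝ) : ℂ))).roots
      = Multiset.map (fun i => ((f i : ℝ) : ℂ)) Finset.univ.val := by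
    intro f
    rw [Finset.prod_eq_multiset_prod]
    have : Multiset.map (fun i => X - C ((f i : ℝ) : ℂ)) Finset.univ.val
        = Multiset.map (fun r : ℂ => X - C r) (Multiset.map (fun i => ((f i : ℝ) : ℂ)) Finset.univ.val) := by
      rw [Multiset.map_map]; rfl
    rw [this, roots_multiset_prod_X_sub_C]
  have h3 := congrArg Polynomial.roots h2
  rw [key hA.eigenvalues, key d] at h3
  have h4 : Multiset.map (Complex.ofReal ∘ hA.eigenvalues) Finset.univ.val
      = Multiset.map (Complex.ofReal ∘ d) Finset.univ.val := h3
  rw [← Multiset.map_map Complex.ofReal, ← Multiset.map_map Complex.ofReal] at h4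
  exact Multiset.map_injective Complex.ofReal_injective h4

lemma aux_sum_eig {A : Matrix n n ℂ} (hA : A.IsHermitian) {U : Matrix n n ℂ}
    (hU : U * star U = 1) (d : n → ℝ)
    (hAd : A = U * Matrix.diagonal (fun i => ((d i : ℝ) : ℂ)) * star U) (g : ℝ → ℝ) :
    ∑ i, g (hA.eigenvalues i) = ∑ i, g (d i) := by
  have h := congrArg (fun s : Multiset ℝ => (s.map g).sum) (aux_eig_multiset hA hU d hAd)
  simp only [Multiset.map_map] at h
  rw [show (∑ i, g (hA.eigenvalues i)) = (Multiset.map (g ∘ hA.eigenvalues) Finset.univ.val).sum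
    from rfl, show (∑ i, g (d i)) = (Multiset.map (g ∘ d) Finset.univ.val).sum from rfl]
  exact h

lemma aux_kron_conjTranspose (A : Matrix n n ℂ) (B : Matrix m m ℂ) :
    (A ⊗ₖ B)ᴴ = Aᴴ ⊗ₖ Bᴴ := by
  ext ⟨a, b⟩ ⟨c, d⟩
  simp [conjTranspose_apply, kroneckerMap_apply]

lemma aux_kron_psd {A : Matrix n n ℂ} {B : Matrix m m ℂ}
    (hA : A.PosSemidef) (hB : B.PosSemidef) : (A ⊗ₖ B).PosSemidef := by
  exact hA.kronecker hB

lemma aux_sum_eig_kron {A : Matrix n n ℂ} {B : Matrix m m ℂ}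
    (hA : A.IsHermitian) (hB : B.IsHermitian) (hK : (A ⊗ₖ B).IsHermitian) (g : ℝ → ℝ) :
    ∑ i, g (hK.eigenvalues i)
      = ∑ p : n × m, g (hA.eigenvalues p.1 * hB.eigenvalues p.2) := by
  set U : Matrix n n ℂ := (hA.eigenvectorUnitary : Matrix n n ℂ) with hUdef
  set V : Matrix m m ℂ := (hB.eigenvectorUnitary : Matrix m m ℂ) with hVdef
  have hU : U * star U = 1 := (Matrix.mem_unitaryGroup_iff).mp (hA.eigenvectorUnitary).2
  have hV : V * star V = 1 := (Matrix.mem_unitaryGroup_iff).mp (hB.eigenvectorUnitary).2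
  have hstar : star (U ⊗ₖ V) = star U ⊗ₖ star V := by
    simp only [Matrix.star_eq_conjTranspose]
    exact aux_kron_conjTranspose U V
  have hUV : (U ⊗ₖ V) * star (U ⊗ₖ V) = 1 := by
    rw [hstar, ← Matrix.mul_kronecker_mul, hU, hV, Matrix.one_kronecker_one]
  have hdec : A ⊗ₖ B = (U ⊗ₖ V) * Matrix.diagonal
      (fun p : n × m => (((hA.eigenvalues p.1 * hB.eigenvalues p.2 : ℝ)) : ℂ))
      * star (U ⊗ₖ V) := by
    conv_lhs => rw [hA.spectral_theorem, hB.spectral_theorem, Unitary.conjStarAlgAut_apply,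
      Unitary.conjStarAlgAut_apply]
    have hd : (Matrix.diagonal (fun mn : n × m =>
          (RCLike.ofReal ∘ hA.eigenvalues) mn.1 * (RCLike.ofReal ∘ hB.eigenvalues) mn.2)
            : Matrix (n × m) (n × m) ℂ)
        = Matrix.diagonal
            (fun p : n × m => ((hA.eigenvalues p.1 * hB.eigenvalues p.2 : ℝ) : ℂ)) := by
      apply congrArg Matrix.diagonal
      funext p
      show ((hA.eigenvalues p.1 : ℂ)) * ((hB.eigenvalues p.2 : ℂ))
          = ((hA.eigenvalues p.1 * hB.eigenvalues p.2 : ℝ) : ℂ)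
      push_cast
      ring
    rw [Matrix.mul_kronecker_mul, Matrix.mul_kronecker_mul, ← hstar,
      Matrix.diagonal_kronecker_diagonal, hd]
  exact aux_sum_eig hK hUV _ hdec g

section ptr
variable {α β δ η : Type*} [Fintype α] [Fintype β] [Fintype δ] [Fintype η]
  [DecidableEq α] [DecidableEq β] [DecidableEq δ] [DecidableEq η]

lemma aux_psd_sum {ι κ : Type*} [Fintype κ] [DecidableEq κ] (s : Finset ι)
    (f : ι → Matrix κ κ ℂ) (h : ∀ i ∈ s, (f i).PosSemidef) :
    (∑ i ∈ s, f i).PosSemidef :=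
  Finset.sum_induction f _ (fun _ _ ha hb => ha.add hb) Matrix.PosSemidef.zero h

lemma ptraceB_psd {ρ : Matrix (α × β × δ) (α × β × δ) ℂ} (hρ : ρ.PosSemidef) :
    (ptraceB ρ).PosSemidef := by
  have : ptraceB ρ = ∑ b : β, ρ.submatrix (fun w : α × δ => (w.1, b, w.2))
      (fun w : α × δ => (w.1, b, w.2)) := by
    ext w w'
    simp [ptraceB, Matrix.submatrix, Matrix.sum_apply]
  rw [this]
  exact aux_psd_sum _ _ fun b _ => hρ.submatrix _

lemma ptraceA_psd {ρ : Matrix (α × β × δ) (α × β × δ) ℂ} (hρ : ρ.PosSemidef) :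
    (ptraceA ρ).PosSemidef := by
  have : ptraceA ρ = ∑ a : α, ρ.submatrix (fun w : β × δ => (a, w.1, w.2))
      (fun w : β × δ => (a, w.1, w.2)) := by
    ext w w'
    simp [ptraceA, Matrix.submatrix, Matrix.sum_apply]
  rw [this]
  exact aux_psd_sum _ _ fun a _ => hρ.submatrix _

lemma ptraceAB_psd {ρ : Matrix (α × β × δ) (α × β × δ) ℂ} (hρ : ρ.PosSemidef) :
    (ptraceAB ρ).PosSemidef := by
  have : ptraceAB ρ = ∑ p : α × β, ρ.submatrix (fun d : δ => (p.1, p.2, d))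
      (fun d : δ => (p.1, p.2, d)) := by
    ext w w'
    simp [ptraceAB, Matrix.submatrix, Matrix.sum_apply, Fintype.sum_prod_type]
  rw [this]
  exact aux_psd_sum _ _ fun p _ => hρ.submatrix _

lemma ptraceB4_kron (σ : Matrix η η ℂ) (τ : Matrix (α × β × δ) (α × β × δ) ℂ) :
    ptraceB4 (σ ⊗ₖ τ) = σ ⊗ₖ ptraceB τ := by
  ext w w'
  simp [ptraceB4, ptraceB, Matrix.kroneckerMap_apply, Finset.mul_sum]

lemma ptraceA4_kron (σ : Matrix η η ℂ) (τ : Matrix (α × β × δ) (α × β × δ) ℂ) :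
    ptraceA4 (σ ⊗ₖ τ) = σ ⊗ₖ ptraceA τ := by
  ext w w'
  simp [ptraceA4, ptraceA, Matrix.kroneckerMap_apply, Finset.mul_sum]

lemma ptraceAB4_kron (σ : Matrix η η ℂ) (τ : Matrix (α × β × δ) (α × β × δ) ℂ) :
    ptraceAB4 (σ ⊗ₖ τ) = σ ⊗ₖ ptraceAB τ := by
  ext w w'
  simp [ptraceAB4, ptraceAB, Matrix.kroneckerMap_apply, Finset.mul_sum]

end ptr

lemma aux_trace_eq {A : Matrix n n ℂ} (hA : A.IsHermitian) :
    A.trace = ((∑ i, hA.eigenvalues i : ℝ) : ℂ) := by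
  conv_lhs => rw [hA.spectral_theorem, Unitary.conjStarAlgAut_apply]
  rw [Matrix.trace_mul_cycle, (Matrix.mem_unitaryGroup_iff').mp (hA.eigenvectorUnitary).2,
    one_mul, Matrix.trace_diagonal]
  push_cast
  rfl

lemma aux_fBound_nonneg {q : ℝ} (hq : 1 < q) (a b : ℕ) :
    0 ≤ (1 / (q - 1)) * (1 - (a : ℝ) ^ (1 - q)) * (1 - (b : ℝ) ^ (1 - q)) := by
  have key : ∀ c : ℕ, (c : ℝ) ^ (1 - q) ≤ 1 := by
    intro c
    rcases Nat.eq_zero_or_pos c with hc | hc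
    · subst hc
      rw [Nat.cast_zero, Real.zero_rpow (by linarith)]
      norm_num
    · exact Real.rpow_le_one_of_one_le_of_nonpos
        (by exact_mod_cast hc) (by linarith)
  have h1 := key a
  have h2 := key b
  have : 0 < q - 1 := by linarith
  have h3 : (0:ℝ) ≤ 1 / (q - 1) := by positivity
  exact mul_nonneg (mul_nonneg h3 (by linarith)) (by linarith)

lemma aux_filter_sum_kron (q : ℝ) {σ : Matrix n n ℂ} {τ : Matrix m m ℂ}
    (hσ : σ.PosSemidef) (hτ : τ.PosSemidef) (hK : (σ ⊗ₖ τ).IsHermitian) :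
    (∑ i ∈ univ.filter (fun i => 0 < hK.eigenvalues i), hK.eigenvalues i ^ q)
      = (∑ i ∈ univ.filter (fun i => 0 < hσ.1.eigenvalues i), hσ.1.eigenvalues i ^ q)
        * (∑ i ∈ univ.filter (fun i => 0 < hτ.1.eigenvalues i), hτ.1.eigenvalues i ^ q) := by
  have hmul : ∀ a b : ℝ, 0 ≤ a → 0 ≤ b →
      (if 0 < a * b then (a * b) ^ q else 0)
        = (if 0 < a then a ^ q else 0) * (if 0 < b then b ^ q else 0) := by
    intro a b ha hb
    by_cases hA : 0 < a
    · by_cases hB : 0 < b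
      · rw [if_pos (mul_pos hA hB), if_pos hA, if_pos hB, Real.mul_rpow ha hb]
      · have hb0 : b = 0 := le_antisymm (not_lt.mp hB) hb
        simp [hb0]
    · have ha0 : a = 0 := le_antisymm (not_lt.mp hA) ha
      simp [ha0]
  rw [Finset.sum_filter, Finset.sum_filter, Finset.sum_filter]
  rw [show (∑ i, if 0 < hK.eigenvalues i then hK.eigenvalues i ^ q else 0)
      = ∑ i, (fun x : ℝ => if 0 < x then x ^ q else 0) (hK.eigenvalues i) from rfl]
  rw [aux_sum_eig_kron hσ.1 hτ.1 hK (fun x : ℝ => if 0 < x then x ^ q else 0)]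
  rw [Fintype.sum_prod_type]
  rw [Finset.sum_mul_sum]
  apply Finset.sum_congr rfl
  intro i _
  apply Finset.sum_congr rfl
  intro j _
  exact hmul _ _ (hσ.eigenvalues_nonneg i) (hτ.eigenvalues_nonneg j)

lemma aux_P_bounds (q : ℝ) (hq : 1 < q) {σ : Matrix n n ℂ}
    (hσ : σ.PosSemidef) (hσ1 : σ.trace = 1) :
    0 ≤ (∑ i ∈ univ.filter (fun i => 0 < hσ.1.eigenvalues i), hσ.1.eigenvalues i ^ q)
    ∧ (∑ i ∈ univ.filter (fun i => 0 < hσ.1.eigenvalues i), hσ.1.eigenvalues i ^ q) ≤ 1 := by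
  have hsum : ∑ i, hσ.1.eigenvalues i = 1 := by
    have := (aux_trace_eq hσ.1).symm.trans hσ1
    exact_mod_cast this
  have hle1 : ∀ i, hσ.1.eigenvalues i ≤ 1 := by
    intro i
    rw [← hsum]
    exact Finset.single_le_sum (fun j _ => hσ.eigenvalues_nonneg j) (mem_univ i)
  constructor
  · exact Finset.sum_nonneg fun i hi =>
      Real.rpow_nonneg (hσ.eigenvalues_nonneg i) q
  · calc (∑ i ∈ univ.filter (fun i => 0 < hσ.1.eigenvalues i), hσ.1.eigenvalues i ^ q)
        ≤ ∑ i ∈ univ.filter (fun i => 0 < hσ.1.eigenvalues i), hσ.1.eigenvalues i := by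
          apply Finset.sum_le_sum
          intro i hi
          have hpos : 0 < hσ.1.eigenvalues i := (Finset.mem_filter.mp hi).2
          calc hσ.1.eigenvalues i ^ q ≤ hσ.1.eigenvalues i ^ (1:ℝ) :=
                Real.rpow_le_rpow_of_exponent_ge hpos (hle1 i) (le_of_lt hq)
            _ = hσ.1.eigenvalues i := Real.rpow_one _
      _ ≤ ∑ i, hσ.1.eigenvalues i := by
          apply Finset.sum_le_sum_of_subset_of_nonneg (Finset.filter_subset _ _)
          intro i _ _
          exact hσ.eigenvalues_nonneg i
      _ = 1 := hsum


lemma qTsallis_psd (q : ℝ) {κ : Type*} [Fintype κ] [DecidableEq κ]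
    {A : Matrix κ κ ℂ} (hA : A.PosSemidef) :
    qTsallis q A = (1 / (1 - q)) *
      ((∑ i ∈ univ.filter (fun i => 0 < hA.1.eigenvalues i), hA.1.eigenvalues i ^ q) - 1) := by
  rw [qTsallis, dif_pos hA.1]

end AuxProofs

/-- For `σ̂ = σ ⊗ τ`, with `τ` a state on `A × B × D` and `σ` a state on `C`,
the conditional quantum Tsallis mutual information satisfies
`I_q(A:B|CD)_{σ̂} = (∑_{μ_i > 0} μ_i^q) · I_q(A:B|D)_τ`, where `μ_i` are the
eigenvalues of `σ`; consequently, for `q > 1`, if `I_q(A:B|D)_τ ≤ f(q,d_A,d_B)`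
then `I_q(A:B|CD)_{σ̂} ≤ f(q,d_A,d_B)`. -/
theorem quantum_tsallis_cond_mutual_info_tensor
    {dA dB dD dC : ℕ}
    (τ : Matrix (Fin dA × Fin dB × Fin dD) (Fin dA × Fin dB × Fin dD) ℂ)
    (hτ : τ.PosSemidef) (hτ1 : τ.trace = 1)
    (σ : Matrix (Fin dC) (Fin dC) ℂ)
    (hσ : σ.PosSemidef) (hσ1 : σ.trace = 1)
    (q : ℝ) (hq : 0 < q) (hq1 : q ≠ 1) :
    qTsallis q (ptraceB4 (σ ⊗ₖ τ)) + qTsallis q (ptraceA4 (σ ⊗ₖ τ))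
        - qTsallis q (ptraceAB4 (σ ⊗ₖ τ)) - qTsallis q (σ ⊗ₖ τ)
      = (∑ i ∈ univ.filter (fun i => 0 < hσ.1.eigenvalues i), hσ.1.eigenvalues i ^ q)
        * (qTsallis q (ptraceB τ) + qTsallis q (ptraceA τ)
            - qTsallis q (ptraceAB τ) - qTsallis q τ)
    ∧ (1 < q →
        qTsallis q (ptraceB τ) + qTsallis q (ptraceA τ)
            - qTsallis q (ptraceAB τ) - qTsallis q τ ≤ fBound q dA dB →
        qTsallis q (ptraceB4 (σ ⊗ₖ τ)) + qTsallis q (ptraceA4 (σ ⊗ₖ τ))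
            - qTsallis q (ptraceAB4 (σ ⊗ₖ τ)) - qTsallis q (σ ⊗ₖ τ)
          ≤ fBound q dA dB) := by
  have hBt : (ptraceB τ).PosSemidef := ptraceB_psd hτ
  have hAt : (ptraceA τ).PosSemidef := ptraceA_psd hτ
  have hABt : (ptraceAB τ).PosSemidef := ptraceAB_psd hτ
  have hKt : (σ ⊗ₖ τ).PosSemidef := aux_kron_psd hσ hτ
  have hKB : (σ ⊗ₖ ptraceB τ).PosSemidef := aux_kron_psd hσ hBt
  have hKA : (σ ⊗ₖ ptraceA τ).PosSemidef := aux_kron_psd hσ hAt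
  have hKAB : (σ ⊗ₖ ptraceAB τ).PosSemidef := aux_kron_psd hσ hABt
  have e1 : ptraceB4 (σ ⊗ₖ τ) = σ ⊗ₖ ptraceB τ := ptraceB4_kron σ τ
  have e2 : ptraceA4 (σ ⊗ₖ τ) = σ ⊗ₖ ptraceA τ := ptraceA4_kron σ τ
  have e3 : ptraceAB4 (σ ⊗ₖ τ) = σ ⊗ₖ ptraceAB τ := ptraceAB4_kron σ τ
  have hmain : qTsallis q (ptraceB4 (σ ⊗ₖ τ)) + qTsallis q (ptraceA4 (σ ⊗ₖ τ))
        - qTsallis q (ptraceAB4 (σ ⊗ₖ τ)) - qTsallis q (σ ⊗ₖ τ)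
      = (∑ i ∈ univ.filter (fun i => 0 < hσ.1.eigenvalues i), hσ.1.eigenvalues i ^ q)
        * (qTsallis q (ptraceB τ) + qTsallis q (ptraceA τ)
            - qTsallis q (ptraceAB τ) - qTsallis q τ) := by
    rw [e1, e2, e3]
    rw [qTsallis_psd q hKB, qTsallis_psd q hKA, qTsallis_psd q hKAB, qTsallis_psd q hKt,
      qTsallis_psd q hBt, qTsallis_psd q hAt, qTsallis_psd q hABt, qTsallis_psd q hτ,
      aux_filter_sum_kron q hσ hBt hKB.1, aux_filter_sum_kron q hσ hAt hKA.1,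
      aux_filter_sum_kron q hσ hABt hKAB.1, aux_filter_sum_kron q hσ hτ hKt.1]
    ring
  refine ⟨hmain, fun hq2 hle => ?_⟩
  rw [hmain]
  obtain ⟨hP0, hP1⟩ := aux_P_bounds q hq2 hσ hσ1
  have hf0 : 0 ≤ fBound q dA dB := by
    unfold fBound
    exact aux_fBound_nonneg hq2 dA dB
  nlinarith [mul_nonneg hP0 (sub_nonneg.mpr hle), mul_nonneg (sub_nonneg.mpr hP1) hf0]
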